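/- Let K be a field, let A, B, U, Y ∈ K with U ≠ 0, and suppose Y² = U⁶ + AU⁴ + BU². Define x = 2(Y + U³)/U and y = 4Y + 4U³ + 2UA. Then y² = (x + A)(x² − 4B). -/
import Mathlib


/-- The birational transformation of Section 4.5.1 of the paper: it carries the curve
`Y² = U⁶ + AU⁴ + BU²` to the Weierstrass form `y² = (x + A)(x² − 4B)`. -/
theorem stmt8 {K : Type*} [Field K] (A B U Y x y : K) (hU : U ≠ 0)
    (h : Y ^ 2 = U ^ 6 + A * U ^ 4 + B * U ^ 2)
    (hx : x = 2 * (Y + U ^ 3) / U)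
    (hy : y = 4 * Y + 4 * U ^ 3 + 2 * U * A) :
    y ^ 2 = (x + A) * (x ^ 2 - 4 * B) := by
  subst hx hy
  field_simp
  ring_nf
  linear_combination (-8*Y - 4*A*U - 8*U^3) * h
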